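/- Last-removed element beats all others pairwise: let l = [s₁, ..., sₘ] be a duplicate-free list, and empty it by repeatedly removing F of the current state; let g be the last element removed. Then for every other element s of l, if s occurs before g in l then F [s, g] = s, and if g occurs before s in l then F [g, s] = s. -/

import Mathlib

/-- `a` occurs (strictly) before `b` in the list `l`. -/
def Before {α : Type*} (a b : α) (l : List α) : Prop :=
  ∃ l₁ l₂ l₃ : List α, l = l₁ ++ a :: (l₂ ++ b :: l₃)

/-- A consistent choice function on lists. -/
structure ConsistentF {α : Type*} (F : List α → Option α) : Prop where
  empty : F [] = none
  mem : ∀ l : List α, l.Nodup → l ≠ [] → ∃ x ∈ l, F l = some x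
  cons : ∀ l₁ l₂ : List α, l₁.Nodup → l₂.Nodup → ∀ a b : α, a ≠ b →
    Before a b l₁ → F l₁ = some a → Before a b l₂ → F l₂ ≠ some b

/-- One removal step: erase `F s` from the state `s`. -/
def remStep {α : Type*} [DecidableEq α] (F : List α → Option α) (s : List α) : List α :=
  match F s with | none => s | some x => s.erase x

/-- The state of the emptying process after `k` removals, starting from `l`. -/
def stateAfter {α : Type*} [DecidableEq α] (F : List α → Option α) (l : List α) (k : ℕ) :
    List α :=
  (remStep F)^[k] l

lemma before_iff {α : Type*} (a b : α) (l : List α) :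
    Before a b l ↔ List.Sublist [a, b] l := by
  constructor
  · rintro ⟨l₁, l₂, l₃, rfl⟩
    refine List.Sublist.trans ?_ (List.sublist_append_right l₁ _)
    exact List.Sublist.cons₂ a (by simp)
  · intro h
    induction l with
    | nil => simp at h
    | cons c t ih =>
      cases h with
      | cons _ h' =>
        obtain ⟨l₁, l₂, l₃, rfl⟩ := ih h'
        exact ⟨c :: l₁, l₂, l₃, rfl⟩
      | cons_cons _ h' =>
        have hb : b ∈ t := h'.subset (by simp)
        obtain ⟨s, t', rfl⟩ := List.append_of_mem hb
        exact ⟨[], s, t', rfl⟩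

lemma not_both {α : Type*} {a b : α} {l : List α} (hnd : l.Nodup)
    (h1 : List.Sublist [a, b] l) (h2 : List.Sublist [b, a] l) : False := by
  induction l with
  | nil => simp at h1
  | cons c t ih =>
    cases h1 with
    | cons _ h1' =>
      cases h2 with
      | cons _ h2' => exact ih hnd.of_cons h1' h2'
      | cons_cons _ h2' =>
        exact (List.nodup_cons.mp hnd).1 (h1'.subset (by simp))
    | cons_cons _ h1' =>
      cases h2 with
      | cons _ h2' =>
        exact (List.nodup_cons.mp hnd).1 (h2'.subset (by simp))
      | cons_cons _ h2' =>
        exact (List.nodup_cons.mp hnd).1 (h2'.subset (by simp))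

lemma mem_mem_sub {α : Type*} {a b : α} {l : List α} (ha : a ∈ l) (hb : b ∈ l)
    (hab : a ≠ b) : List.Sublist [a, b] l ∨ List.Sublist [b, a] l := by
  induction l with
  | nil => simp at ha
  | cons c t ih =>
    rcases eq_or_ne a c with rfl | hac
    · have hb' : b ∈ t := by
        rcases List.mem_cons.mp hb with rfl | h
        · exact absurd rfl hab
        · exact h
      exact Or.inl (List.Sublist.cons₂ a (List.singleton_sublist.mpr hb'))
    rcases eq_or_ne b c with rfl | hbc
    · have ha' : a ∈ t := by
        rcases List.mem_cons.mp ha with rfl | h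
        · exact absurd rfl hac
        · exact h
      exact Or.inr (List.Sublist.cons₂ b (List.singleton_sublist.mpr ha'))
    · have ha' : a ∈ t := by
        rcases List.mem_cons.mp ha with rfl | h
        · exact absurd rfl hac
        · exact h
      have hb' : b ∈ t := by
        rcases List.mem_cons.mp hb with rfl | h
        · exact absurd rfl hbc
        · exact h
      rcases ih ha' hb' with h | h
      · exact Or.inl (h.cons c)
      · exact Or.inr (h.cons c)

/-- Order transfers from a nodup list to a sublist containing both elements. -/
lemma before_sub {α : Type*} {a b : α} {l sub : List α} (hnd : l.Nodup)
    (hsub : sub.Sublist l) (ha : a ∈ sub) (hb : b ∈ sub) (hab : a ≠ b)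
    (h : Before a b l) : Before a b sub := by
  rw [before_iff] at h ⊢
  rcases mem_mem_sub ha hb hab with h' | h'
  · exact h'
  · exact absurd (h'.trans hsub) fun h2 => not_both hnd h h2

lemma stateAfter_succ {α : Type*} [DecidableEq α] (F : List α → Option α) (l : List α)
    (k : ℕ) : stateAfter F l (k + 1) = remStep F (stateAfter F l k) :=
  Function.iterate_succ_apply' _ _ _

lemma remStep_sublist {α : Type*} [DecidableEq α] (F : List α → Option α) (s : List α) :
    (remStep F s).Sublist s := by
  cases h : F s <;> simp [remStep, h, List.erase_sublist]

lemma stateAfter_sublist {α : Type*} [DecidableEq α] (F : List α → Option α) (l : List α)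
    (k : ℕ) : (stateAfter F l k).Sublist l := by
  induction k with
  | zero => exact List.Sublist.refl l
  | succ n ih => exact (stateAfter_succ F l n ▸ remStep_sublist F _).trans ih

lemma stateAfter_mono {α : Type*} [DecidableEq α] (F : List α → Option α) (l : List α)
    {k m : ℕ} (h : k ≤ m) : (stateAfter F l m).Sublist (stateAfter F l k) := by
  obtain ⟨j, rfl⟩ := Nat.exists_eq_add_of_le h
  have : stateAfter F l (k + j) = stateAfter F (stateAfter F l k) j := by
    simp [stateAfter, Nat.add_comm k j, Function.iterate_add_apply]
  rw [this]
  exact stateAfter_sublist F _ j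

lemma stateAfter_length {α : Type*} [DecidableEq α] {F : List α → Option α}
    (hF : ConsistentF F) {l : List α} (hnd : l.Nodup) :
    ∀ k, k ≤ l.length → (stateAfter F l k).length = l.length - k := by
  intro k
  induction k with
  | zero => simp [stateAfter]
  | succ n ih =>
    intro hk
    have hn : n ≤ l.length := Nat.le_of_succ_le hk
    have hlen := ih hn
    have hpos : 0 < (stateAfter F l n).length := by omega
    have hnd' : (stateAfter F l n).Nodup := (stateAfter_sublist F l n).nodup hnd
    obtain ⟨x, hx, hFx⟩ := hF.mem _ hnd' (List.ne_nil_of_length_pos hpos)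
    rw [stateAfter_succ, remStep, hFx]
    rw [List.length_erase_of_mem hx, hlen]
    omega

lemma exists_last_true (P : ℕ → Prop) (n : ℕ) (h0 : P 0) (hn : ¬ P n) :
    ∃ k < n, P k ∧ ¬ P (k + 1) := by
  induction n with
  | zero => exact absurd h0 hn
  | succ m ih =>
    by_cases hm : P m
    · exact ⟨m, Nat.lt_succ_self m, hm, hn⟩
    · obtain ⟨k, hk, h1, h2⟩ := ih hm
      exact ⟨k, Nat.lt_succ_of_lt hk, h1, h2⟩

theorem stmt10 {α : Type*} [DecidableEq α] (F : List α → Option α) (hF : ConsistentF F)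
    (l : List α) (hnd : l.Nodup) (hne : l ≠ []) (g : α)
    (hg : F (stateAfter F l (l.length - 1)) = some g) :
    ∀ s ∈ l, s ≠ g →
      (Before s g l → F [s, g] = some s) ∧ (Before g s l → F [g, s] = some s) := by
  intro s hs hsg
  have hlpos : 0 < l.length := List.length_pos_iff.mpr hne
  -- the final state is [g]
  have hfin_len : (stateAfter F l (l.length - 1)).length = 1 := by
    rw [stateAfter_length hF hnd _ (by omega)]; omega
  have hfin_nd : (stateAfter F l (l.length - 1)).Nodup :=
    (stateAfter_sublist F l _).nodup hnd
  have hg_mem : g ∈ stateAfter F l (l.length - 1) := by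
    obtain ⟨x, hx, hFx⟩ := hF.mem _ hfin_nd (by
      intro h; rw [h] at hfin_len; simp at hfin_len)
    rw [hFx] at hg
    exact (Option.some_injective _ hg) ▸ hx
  have hs_notin : s ∉ stateAfter F l (l.length - 1) := by
    intro hmem
    obtain ⟨x, hx⟩ := List.length_eq_one_iff.mp hfin_len
    rw [hx] at hmem hg_mem
    simp at hmem hg_mem
    exact hsg (hmem.trans hg_mem.symm)
  -- find the step where s is removed
  obtain ⟨k, hk, hsk, hsk1⟩ :=
    exists_last_true (fun k => s ∈ stateAfter F l k) (l.length - 1) hs hs_notin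
  have hknd : (stateAfter F l k).Nodup := (stateAfter_sublist F l k).nodup hnd
  have hkne : stateAfter F l k ≠ [] := by
    intro h; rw [h] at hsk; simp at hsk
  obtain ⟨x, hx, hFx⟩ := hF.mem _ hknd hkne
  have hxs : x = s := by
    by_contra hxs
    apply hsk1
    rw [stateAfter_succ, remStep, hFx]
    exact (List.mem_erase_of_ne (fun h => hxs h.symm)).mpr hsk
  rw [hxs] at hx hFx
  -- g is in the state at step k
  have hgk : g ∈ stateAfter F l k :=
    (stateAfter_mono F l (Nat.le_of_lt hk)).subset hg_mem
  constructor
  · intro hB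
    have hB' : Before s g (stateAfter F l k) :=
      before_sub hnd (stateAfter_sublist F l k) hsk hgk hsg hB
    have hB2 : Before s g [s, g] := ⟨[], [], [], rfl⟩
    have hne2 : F [s, g] ≠ some g :=
      hF.cons _ _ hknd (by simp [hsg]) s g hsg hB' hFx hB2
    obtain ⟨y, hy, hFy⟩ := hF.mem [s, g] (by simp [hsg]) (by simp)
    rcases List.mem_cons.mp hy with hy0 | hy'
    · rw [hy0] at hFy
      exact hFy
    · simp at hy'
      rw [hy'] at hFy
      exact absurd hFy hne2
  · intro hB
    have hB' : Before g s (stateAfter F l k) :=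
      before_sub hnd (stateAfter_sublist F l k) hgk hsk (Ne.symm hsg) hB
    have hB2 : Before g s [g, s] := ⟨[], [], [], rfl⟩
    obtain ⟨y, hy, hFy⟩ := hF.mem [g, s] (by simp [Ne.symm hsg]) (by simp)
    rcases List.mem_cons.mp hy with hy0 | hy'
    · rw [hy0] at hFy
      exact absurd hFx
        (hF.cons _ _ (by simp [Ne.symm hsg]) hknd g s (Ne.symm hsg) hB2 hFy hB')
    · simp at hy'
      rw [hy'] at hFy
      exact hFy
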